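/- Let 𝔊₉ be the 7-dimensional real Lie algebra with basis (X₁,X₂,X₃,X₄,X₅,X,Y) and nonzero brackets [X₁,X₂]=X₄, [X₁,X₃]=X₅, [X,X₃]=X₃, [X,X₅]=X₅, [Y,X₂]=X₂, [Y,X₄]=X₄, [Y,X₃]=X₅. For F ∈ 𝔊₉* with coordinates (α₁,α₂,α₃,α₄,α₅,α,β) in the dual basis, let B_F be the skew-symmetric bilinear form on 𝔊₉ defined by B_F(A,B) = ⟨F,[A,B]⟩. Then the rank of B_F equals 6 if and only if either (α₄ = 0 and α₂α₅ ≠ 0) or (α₄ ≠ 0 and (α₃ ≠ 0 or α₅ ≠ 0)); in particular the maximal possible rank of B_F over all F is 6. -/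

import Mathlib

set_option maxRecDepth 8000
set_option maxHeartbeats 2000000

noncomputable section

/-- Half of the structure constants of the Lie algebra 𝔊₉: `g9half i j` is the
coordinate vector of `[Xᵢ, Xⱼ]` for the ordered pairs `(i,j)` listed in the paper
(indices `0,…,4` are `X₁,…,X₅`, index `5` is `X`, index `6` is `Y`). -/
def g9half (i j : Fin 7) : Fin 7 → ℝ :=
  if i = 0 ∧ j = 1 then Pi.single 3 1      -- [X₁,X₂] = X₄
  else if i = 0 ∧ j = 2 then Pi.single 4 1 -- [X₁,X₃] = X₅
  else if i = 5 ∧ j = 2 then Pi.single 2 1 -- [X,X₃] = X₃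
  else if i = 5 ∧ j = 4 then Pi.single 4 1 -- [X,X₅] = X₅
  else if i = 6 ∧ j = 1 then Pi.single 1 1 -- [Y,X₂] = X₂
  else if i = 6 ∧ j = 3 then Pi.single 3 1 -- [Y,X₄] = X₄
  else if i = 6 ∧ j = 2 then Pi.single 4 1 -- [Y,X₃] = X₅
  else 0

/-- The bracket `[Xᵢ, Xⱼ]` (in coordinates) of basis vectors of 𝔊₉. -/
def g9br (i j : Fin 7) : Fin 7 → ℝ := g9half i j - g9half j i

/-- The Gram matrix of the bilinear form `B_F(A,B) = ⟨F,[A,B]⟩` in the given basis,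
where `α` is the coordinate vector of `F` in the dual basis. -/
def gramG9 (α : Fin 7 → ℝ) : Matrix (Fin 7) (Fin 7) ℝ :=
  Matrix.of fun i j => ∑ k, α k * g9br i j k

open Matrix

namespace G9Aux

lemma cons7_5 {β : Type*} (a0 a1 a2 a3 a4 a5 a6 : β) :
    ![a0,a1,a2,a3,a4,a5,a6] (5 : Fin 7) = a5 := rfl

lemma cons7_6 {β : Type*} (a0 a1 a2 a3 a4 a5 a6 : β) :
    ![a0,a1,a2,a3,a4,a5,a6] (6 : Fin 7) = a6 := rfl

lemma cons6_5 {β : Type*} (a0 a1 a2 a3 a4 a5 : β) :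
    ![a0,a1,a2,a3,a4,a5] (5 : Fin 6) = a5 := rfl

/-- The explicit Gram matrix, with `p = α₂, q = α₃, r = α₄, s = α₅`. -/
def Emat (p q r s : ℝ) : Matrix (Fin 7) (Fin 7) ℝ :=
  !![0, r, s, 0, 0, 0, 0;
     -r, 0, 0, 0, 0, 0, -p;
     -s, 0, 0, 0, 0, -q, -s;
     0, 0, 0, 0, 0, 0, -r;
     0, 0, 0, 0, 0, -s, 0;
     0, 0, q, 0, s, 0, 0;
     0, p, s, r, 0, 0, 0]

lemma gram_eq (α : Fin 7 → ℝ) : gramG9 α = Emat (α 1) (α 2) (α 3) (α 4) := by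
  ext i j
  fin_cases i <;> fin_cases j <;>
    simp [gramG9, g9br, g9half, Emat, Fin.sum_univ_seven, Pi.single_apply] <;> try rfl

lemma gram_skew (α : Fin 7 → ℝ) : (gramG9 α)ᵀ = -(gramG9 α) := by
  ext i j
  have h : ∀ k, α k * g9br j i k = -(α k * g9br i j k) := fun k => by
    simp [g9br]; ring
  simp only [gramG9, Matrix.transpose_apply, Matrix.of_apply, Matrix.neg_apply]
  rw [Finset.sum_congr rfl (fun k _ => h k)]
  exact Finset.sum_neg_distrib (f := fun k => α k * g9br i j k)

lemma rank_add_ker (M : Matrix (Fin 7) (Fin 7) ℝ) :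
    M.rank + Module.finrank ℝ (LinearMap.ker M.mulVecLin) = 7 := by
  have h := LinearMap.finrank_range_add_finrank_ker M.mulVecLin
  simpa [Matrix.rank] using h

lemma rank_le_six (M : Matrix (Fin 7) (Fin 7) ℝ) (h : Mᵀ = -M) : M.rank ≤ 6 := by
  have hdet : M.det = 0 := by
    have h1 : M.det = (-M).det := (Matrix.det_transpose M).symm.trans (congrArg Matrix.det h)
    have h2 := Matrix.det_neg M
    rw [Fintype.card_fin] at h2
    norm_num at h2
    linarith [h1, h2]
  obtain ⟨v, hv, hmv⟩ := (Matrix.exists_mulVec_eq_zero_iff).mpr hdet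
  have hker : 1 ≤ Module.finrank ℝ (LinearMap.ker M.mulVecLin) := by
    have hmem : v ∈ LinearMap.ker M.mulVecLin := by simpa [Matrix.mulVecLin] using hmv
    have : Nontrivial (LinearMap.ker M.mulVecLin) := by
      refine ⟨⟨⟨v, hmem⟩, 0, ?_⟩⟩
      simp [hv]
    exact Module.finrank_pos
  have := rank_add_ker M
  omega

lemma rank_le_five (M : Matrix (Fin 7) (Fin 7) ℝ) (i j : Fin 7) (hij : i ≠ j)
    (hi : M.mulVec (Pi.single i 1) = 0) (hj : M.mulVec (Pi.single j 1) = 0) :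
    M.rank ≤ 5 := by
  have hli : LinearIndependent ℝ ![(Pi.single i 1 : Fin 7 → ℝ), Pi.single j 1] := by
    rw [LinearIndependent.pair_iff]
    intro s t hst
    have h1 := congrFun hst i
    have h2 := congrFun hst j
    simp [Pi.single_apply, hij, hij.symm] at h1 h2
    exact ⟨h1, h2⟩
  have hspan : Submodule.span ℝ (Set.range ![(Pi.single i 1 : Fin 7 → ℝ), Pi.single j 1]) ≤
      LinearMap.ker M.mulVecLin := by
    rw [Submodule.span_le]
    rintro x ⟨k, rfl⟩
    fin_cases k <;>
      simp only [LinearMap.mem_ker, Matrix.mulVecLin_apply, Matrix.cons_val_zero,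
        Matrix.cons_val_one, Matrix.head_cons] <;> [exact hi; exact hj]
  have h2 : 2 ≤ Module.finrank ℝ (LinearMap.ker M.mulVecLin) := by
    have := Submodule.finrank_mono hspan
    rwa [finrank_span_eq_card hli, Fintype.card_fin] at this
  have := rank_add_ker M
  omega

def pickM (f : Fin 6 → Fin 7) : Matrix (Fin 6) (Fin 7) ℝ :=
  Matrix.of fun i j => if j = f i then 1 else 0

lemma pick_spec (f : Fin 6 → Fin 7) (A : Matrix (Fin 7) (Fin 7) ℝ) :
    pickM f * A * (pickM f)ᵀ = A.submatrix f f := by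
  ext i j
  simp [pickM, Matrix.mul_apply, Matrix.transpose_apply, Finset.sum_ite_eq, Finset.sum_ite_eq',
    ite_mul, mul_ite, Finset.mul_sum, Finset.sum_mul]

lemma six_le_rank (A : Matrix (Fin 7) (Fin 7) ℝ) (f : Fin 6 → Fin 7)
    (h : (A.submatrix f f).det ≠ 0) : 6 ≤ A.rank := by
  have h1 : (A.submatrix f f).rank = 6 := by
    rw [Matrix.rank_of_isUnit _ ((Matrix.isUnit_iff_isUnit_det _).mpr (isUnit_iff_ne_zero.mpr h)),
      Fintype.card_fin]
  calc (6 : ℕ) = (A.submatrix f f).rank := h1.symm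
    _ = (pickM f * A * (pickM f)ᵀ).rank := by rw [pick_spec]
    _ ≤ (pickM f * A).rank := Matrix.rank_mul_le_left _ _
    _ ≤ A.rank := Matrix.rank_mul_le_right _ _

def fA : Fin 6 → Fin 7 := ![0,1,2,4,5,6]
def fB : Fin 6 → Fin 7 := ![0,1,2,3,5,6]
def fC : Fin 6 → Fin 7 := ![0,2,3,4,5,6]

/-- Column `j` of `M` vanishes → `eⱼ` is in the kernel. -/
lemma mulVec_single_zero (M : Matrix (Fin 7) (Fin 7) ℝ) (j : Fin 7)
    (h : ∀ i, M i j = 0) : M.mulVec (Pi.single j 1) = 0 := by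
  funext i
  simp [Matrix.mulVec, dotProduct, Pi.single_apply, mul_ite, h i, Pi.zero_apply]

-- Minor determinants for the three generic cases.

lemma detA (p q s : ℝ) (hp : p ≠ 0) (hs : s ≠ 0) :
    ((Emat p q 0 s).submatrix fA fA).det ≠ 0 := by
  have hsub : (Emat p q 0 s).submatrix fA fA =
      !![0, 0, s, 0, 0, 0;
         0, 0, 0, 0, 0, -p;
         -s, 0, 0, 0, -q, -s;
         0, 0, 0, 0, -s, 0;
         0, 0, q, s, 0, 0;
         0, p, s, 0, 0, 0] := by
    ext i j; fin_cases i <;> fin_cases j <;> first | rfl | exact neg_zero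
  have hdet : ((Emat p q 0 s).submatrix fA fA).det = p^2 * s^4 := by
    rw [hsub]
    simp +decide [Matrix.det_succ_row_zero, Fin.sum_univ_succ, Fin.succAbove]
    ring
  rw [hdet]
  exact mul_ne_zero (pow_ne_zero _ hp) (pow_ne_zero _ hs)

lemma detB (p q r s : ℝ) (hr : r ≠ 0) (hq : q ≠ 0) :
    ((Emat p q r s).submatrix fB fB).det ≠ 0 := by
  have hsub : (Emat p q r s).submatrix fB fB =
      !![0, r, s, 0, 0, 0;
         -r, 0, 0, 0, 0, -p;
         -s, 0, 0, 0, -q, -s;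
         0, 0, 0, 0, 0, -r;
         0, 0, q, 0, 0, 0;
         0, p, s, r, 0, 0] := by
    ext i j; fin_cases i <;> fin_cases j <;> rfl
  have hdet : ((Emat p q r s).submatrix fB fB).det = q^2 * r^4 := by
    rw [hsub]
    simp +decide [Matrix.det_succ_row_zero, Fin.sum_univ_succ, Fin.succAbove]
    ring
  rw [hdet]
  exact mul_ne_zero (pow_ne_zero _ hq) (pow_ne_zero _ hr)

lemma detC (p q r s : ℝ) (hr : r ≠ 0) (hs : s ≠ 0) :
    ((Emat p q r s).submatrix fC fC).det ≠ 0 := by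
  have hsub : (Emat p q r s).submatrix fC fC =
      !![0, s, 0, 0, 0, 0;
         -s, 0, 0, 0, -q, -s;
         0, 0, 0, 0, 0, -r;
         0, 0, 0, 0, -s, 0;
         0, q, 0, s, 0, 0;
         0, s, r, 0, 0, 0] := by
    ext i j; fin_cases i <;> fin_cases j <;> rfl
  have hdet : ((Emat p q r s).submatrix fC fC).det = r^2 * s^4 := by
    rw [hsub]
    simp +decide [Matrix.det_succ_row_zero, Fin.sum_univ_succ, Fin.succAbove]
    ring
  rw [hdet]
  exact mul_ne_zero (pow_ne_zero _ hr) (pow_ne_zero _ hs)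

end G9Aux

open G9Aux in
/-- For `F ∈ 𝔊₉*` with coordinates `(α₁,…,α₅,α,β)`, the rank of `B_F` is `6`
iff either (`α₄ = 0` and `α₂α₅ ≠ 0`) or (`α₄ ≠ 0` and (`α₃ ≠ 0` or `α₅ ≠ 0`));
in particular the maximal rank is `6`. -/
theorem rank_BF_G9 :
    (∀ α : Fin 7 → ℝ, (gramG9 α).rank ≤ 6) ∧
    (∀ α : Fin 7 → ℝ,
      (gramG9 α).rank = 6 ↔
        ((α 3 = 0 ∧ α 1 * α 4 ≠ 0) ∨ (α 3 ≠ 0 ∧ (α 2 ≠ 0 ∨ α 4 ≠ 0)))) := by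
  have hle : ∀ α : Fin 7 → ℝ, (gramG9 α).rank ≤ 6 := fun α => rank_le_six _ (gram_skew α)
  refine ⟨hle, fun α => ?_⟩
  constructor
  · -- rank = 6 → condition, by contraposition
    intro h6
    by_contra hc
    push_neg at hc
    obtain ⟨hc1, hc2⟩ := hc
    have h5 : (gramG9 α).rank ≤ 5 := by
      by_cases hr : α 3 = 0
      · have hps : α 1 * α 4 = 0 := hc1 hr
        rcases mul_eq_zero.mp hps with hp | hs
        · -- columns 1 and 3 vanish
          refine rank_le_five _ 1 3 (by decide) ?_ ?_ <;>
            · apply mulVec_single_zero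
              intro i
              rw [gram_eq α, hr, hp]
              fin_cases i <;> first | rfl | simp [Emat, cons7_5, cons7_6, Matrix.vecHead, Matrix.vecTail]
        · -- columns 3 and 4 vanish
          refine rank_le_five _ 3 4 (by decide) ?_ ?_ <;>
            · apply mulVec_single_zero
              intro i
              rw [gram_eq α, hr, hs]
              fin_cases i <;> first | rfl | simp [Emat, cons7_5, cons7_6, Matrix.vecHead, Matrix.vecTail]
      · obtain ⟨hq, hs⟩ := hc2 hr
        -- columns 2 and 4 vanish
        refine rank_le_five _ 2 4 (by decide) ?_ ?_ <;>
          · apply mulVec_single_zero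
            intro i
            rw [gram_eq α, hq, hs]
            fin_cases i <;> first | rfl | simp [Emat, cons7_5, cons7_6, Matrix.vecHead, Matrix.vecTail]
    omega
  · rintro (⟨hr, hps⟩ | ⟨hr, hqs⟩)
    · have hp : α 1 ≠ 0 := left_ne_zero_of_mul hps
      have hs : α 4 ≠ 0 := right_ne_zero_of_mul hps
      refine le_antisymm (hle α) (six_le_rank _ fA ?_)
      rw [gram_eq α, hr]
      exact detA _ _ _ hp hs
    · rcases hqs with hq | hs
      · refine le_antisymm (hle α) (six_le_rank _ fB ?_)
        rw [gram_eq α]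
        exact detB _ _ _ _ hr hq
      · refine le_antisymm (hle α) (six_le_rank _ fC ?_)
        rw [gram_eq α]
        exact detC _ _ _ _ hr hs

end
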